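/- Let η be a nonzero Radon measure on ℝ such that 0 ∈ supp(η) and η([−T, T])/T⁴ → 0 as T → ∞. Suppose u ∈ ℝ, u ≠ 0, and c > 0 are such that the pushforward of η under translation by u equals c·η (i.e. η(A − u) = c·η(A) for all Borel sets A). Then c = 1. -/

import Mathlib

open MeasureTheory Filter

private lemma aux_geometric_contradiction
    (η : Measure ℝ) [IsLocallyFiniteMeasure η]
    (hsupp : ∀ ε : ℝ, 0 < ε → 0 < η (Set.Ioo (-ε) ε))
    (hgrowth : Filter.Tendsto (fun T : ℝ => (η (Set.Icc (-T) T)).toReal / T ^ 4)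
      Filter.atTop (nhds 0))
    (v c : ℝ) (hv : v ≠ 0) (hc : 1 < c)
    (hshift : ∀ a b : ℝ, η (Set.Ioo (a + v) (b + v)) = ENNReal.ofReal c * η (Set.Ioo a b)) :
    False := by
  have hc0 : (0:ℝ) < c := lt_trans one_pos hc
  have hfin : ∀ T : ℝ, η (Set.Icc (-T) T) < ⊤ := fun T => isCompact_Icc.measure_lt_top
  set m : ENNReal := η (Set.Ioo (-1) 1) with hm
  have hmfin : m < ⊤ := lt_of_le_of_lt (measure_mono Set.Ioo_subset_Icc_self) (hfin 1)
  have hmpos : 0 < m := hsupp 1 one_pos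
  set m₀ : ℝ := m.toReal with hm₀
  have hm₀pos : 0 < m₀ := ENNReal.toReal_pos hmpos.ne' hmfin.ne
  -- iterate the shift
  have iter : ∀ n : ℕ, η (Set.Ioo (-1 + n * v) (1 + n * v)) = (ENNReal.ofReal c) ^ n * m := by
    intro n
    induction n with
    | zero => simp [hm]
    | succ n ih =>
      have h1 : (-1 : ℝ) + ((n+1 : ℕ) : ℝ) * v = (-1 + (n : ℝ) * v) + v := by push_cast; ring
      have h2 : (1 : ℝ) + ((n+1 : ℕ) : ℝ) * v = (1 + (n : ℝ) * v) + v := by push_cast; ring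
      rw [h1, h2, hshift, ih, pow_succ]
      ring
  -- containment
  set T : ℕ → ℝ := fun n => (n : ℝ) * |v| + 1 with hT
  have hTpos : ∀ n, 0 < T n := by
    intro n
    have : (0:ℝ) ≤ (n : ℝ) * |v| := by positivity
    simp only [hT]; linarith
  have subs : ∀ n : ℕ, Set.Ioo (-1 + (n:ℝ) * v) (1 + (n:ℝ) * v) ⊆ Set.Icc (-(T n)) (T n) := by
    intro n x hx
    have h1 := hx.1
    have h2 := hx.2
    have h3 : -|v| ≤ v := neg_abs_le v
    have h4 : v ≤ |v| := le_abs_self v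
    have h5 : (0:ℝ) ≤ (n : ℝ) := Nat.cast_nonneg n
    constructor
    · simp only [hT]
      nlinarith
    · simp only [hT]
      nlinarith
  -- lower bound on the real side
  have lb : ∀ n : ℕ, c ^ n * m₀ ≤ (η (Set.Icc (-(T n)) (T n))).toReal := by
    intro n
    have h1 : (ENNReal.ofReal c) ^ n * m ≤ η (Set.Icc (-(T n)) (T n)) := by
      rw [← iter n]; exact measure_mono (subs n)
    have h2 := ENNReal.toReal_mono (hfin (T n)).ne h1
    rwa [ENNReal.toReal_mul, ENNReal.toReal_pow, ENNReal.toReal_ofReal hc0.le] at h2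
  -- sequences
  set a : ℕ → ℝ := fun n => (η (Set.Icc (-(T n)) (T n))).toReal / (T n) ^ 4 with ha'
  set b : ℕ → ℝ := fun n => (T n) ^ 4 * (c⁻¹) ^ n with hb'
  have hTtop : Tendsto T atTop atTop := by
    apply tendsto_atTop_add_const_right
    exact tendsto_natCast_atTop_atTop.atTop_mul_const (abs_pos.mpr hv)
  have ha : Tendsto a atTop (nhds 0) := hgrowth.comp hTtop
  -- b tends to 0
  have hcinv : |c⁻¹| < 1 := by
    rw [abs_of_pos (inv_pos.mpr hc0)]
    exact inv_lt_one_of_one_lt₀ hc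
  have hg : Tendsto (fun n : ℕ => (n : ℝ) ^ 4 * (c⁻¹) ^ n) atTop (nhds 0) :=
    tendsto_pow_const_mul_const_pow_of_abs_lt_one 4 hcinv
  have hgshift : Tendsto (fun n : ℕ => ((n + 1 : ℕ) : ℝ) ^ 4 * (c⁻¹) ^ (n + 1)) atTop (nhds 0) :=
    hg.comp (tendsto_add_atTop_nat 1)
  have hb : Tendsto b atTop (nhds 0) := by
    have hK : Tendsto (fun n : ℕ => ((|v| + 1) ^ 4 * c) *
        (((n + 1 : ℕ) : ℝ) ^ 4 * (c⁻¹) ^ (n + 1))) atTop (nhds 0) := by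
      simpa using hgshift.const_mul ((|v| + 1) ^ 4 * c)
    apply squeeze_zero (g := fun n : ℕ => ((|v| + 1) ^ 4 * c) *
        (((n + 1 : ℕ) : ℝ) ^ 4 * (c⁻¹) ^ (n + 1)))
    · intro n
      have : (0:ℝ) < T n := hTpos n
      have : (0:ℝ) ≤ c⁻¹ := (inv_pos.mpr hc0).le
      positivity
    · intro n
      have hle : T n ≤ (|v| + 1) * ((n : ℝ) + 1) := by
        have h5 : (0:ℝ) ≤ (n : ℝ) := Nat.cast_nonneg n
        have h6 : (0:ℝ) ≤ |v| := abs_nonneg v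
        simp only [hT]
        nlinarith
      have hpow : (T n) ^ 4 ≤ ((|v| + 1) * ((n : ℝ) + 1)) ^ 4 :=
        pow_le_pow_left₀ (hTpos n).le hle 4
      have hcc : c * c⁻¹ = 1 := mul_inv_cancel₀ hc0.ne'
      have hrhs : ((|v| + 1) ^ 4 * c) * (((n + 1 : ℕ) : ℝ) ^ 4 * (c⁻¹) ^ (n + 1))
          = ((|v| + 1) * ((n : ℝ) + 1)) ^ 4 * (c⁻¹) ^ n := by
        have : ((|v| + 1) ^ 4 * c) * (((n + 1 : ℕ) : ℝ) ^ 4 * (c⁻¹) ^ (n + 1))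
            = ((|v| + 1) * ((n : ℝ) + 1)) ^ 4 * (c⁻¹) ^ n * (c * c⁻¹) := by
          push_cast; rw [pow_succ]; ring
        rw [this, hcc, mul_one]
      rw [hrhs]
      simp only [hb']
      have hcn : (0:ℝ) ≤ (c⁻¹) ^ n := by positivity
      exact mul_le_mul_of_nonneg_right hpow hcn
    · exact hK
  -- product tends to 0 but is ≥ m₀
  have hprod : Tendsto (fun n => a n * b n) atTop (nhds 0) := by
    simpa using ha.mul hb
  have hbound : ∀ n : ℕ, m₀ ≤ a n * b n := by
    intro n
    have hT4 : (0:ℝ) < (T n) ^ 4 := by positivity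
    have heq : a n * b n = (η (Set.Icc (-(T n)) (T n))).toReal * (c⁻¹) ^ n := by
      simp only [ha', hb']
      field_simp
      exact mul_div_cancel_left₀ _ (hTpos n).ne'
    rw [heq]
    have hcc : c ^ n * (c⁻¹) ^ n = 1 := by
      rw [← mul_pow, mul_inv_cancel₀ hc0.ne', one_pow]
    have h1 : c ^ n * m₀ * (c⁻¹) ^ n ≤
        (η (Set.Icc (-(T n)) (T n))).toReal * (c⁻¹) ^ n :=
      mul_le_mul_of_nonneg_right (lb n) (by positivity)
    calc m₀ = c ^ n * m₀ * (c⁻¹) ^ n := by rw [mul_comm (c ^ n) m₀, mul_assoc, hcc, mul_one]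
      _ ≤ _ := h1
  have : m₀ ≤ 0 := ge_of_tendsto' hprod hbound
  linarith

theorem translation_quasi_invariance_forces_c_eq_one
    (η : Measure ℝ) [IsLocallyFiniteMeasure η] (hne : η ≠ 0)
    (hsupp : ∀ ε : ℝ, 0 < ε → 0 < η (Set.Ioo (-ε) ε))
    (hgrowth : Filter.Tendsto (fun T : ℝ => (η (Set.Icc (-T) T)).toReal / T ^ 4)
      Filter.atTop (nhds 0))
    (u c : ℝ) (hu : u ≠ 0) (hc : 0 < c)
    (htrans : Measure.map (fun x => x + u) η = ENNReal.ofReal c • η) :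
    c = 1 := by
  -- basic translation identity on intervals
  have key : ∀ a b : ℝ, η (Set.Ioo (a - u) (b - u)) = ENNReal.ofReal c * η (Set.Ioo a b) := by
    intro a b
    have hmeas : Measurable (fun x : ℝ => x + u) := measurable_add_const u
    have h := Measure.map_apply (μ := η) hmeas (measurableSet_Ioo : MeasurableSet (Set.Ioo a b))
    rw [htrans] at h
    have hpre : (fun x : ℝ => x + u) ⁻¹' Set.Ioo a b = Set.Ioo (a - u) (b - u) := by
      ext x; simp only [Set.mem_preimage, Set.mem_Ioo]; constructor <;> (rintro ⟨h1, h2⟩; constructor <;> linarith)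
    rw [hpre] at h
    simpa [Measure.smul_apply, smul_eq_mul] using h.symm
  by_contra hne1
  rcases lt_or_gt_of_ne hne1 with hlt | hgt
  · -- c < 1 : shift by +u with factor c⁻¹ > 1
    have hinv : ∀ a b : ℝ, η (Set.Ioo (a + u) (b + u)) = ENNReal.ofReal c⁻¹ * η (Set.Ioo a b) := by
      intro a b
      have h := key (a + u) (b + u)
      simp only [add_sub_cancel_right] at h
      have hc' : ENNReal.ofReal c ≠ 0 := by
        simp [ENNReal.ofReal_eq_zero]; linarith
      have hc'' : ENNReal.ofReal c ≠ ⊤ := ENNReal.ofReal_ne_top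
      rw [ENNReal.ofReal_inv_of_pos hc]
      rw [h, ← mul_assoc, ENNReal.inv_mul_cancel hc' hc'', one_mul]
    exact aux_geometric_contradiction η hsupp hgrowth u c⁻¹ hu
      ((one_lt_inv₀ hc).mpr hlt) hinv
  · -- c > 1 : shift by -u with factor c
    have hshift : ∀ a b : ℝ, η (Set.Ioo (a + -u) (b + -u)) = ENNReal.ofReal c * η (Set.Ioo a b) := by
      intro a b
      simpa [sub_eq_add_neg] using key a b
    exact aux_geometric_contradiction η hsupp hgrowth (-u) c
      (neg_ne_zero.mpr hu) hgt hshift
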